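/- Let G = ℤ with the group topology whose neighborhood basis at 0 is {b_nℤ : n ∈ ℕ}, for a D-sequence (b_n). Then every continuous homomorphism χ : ℤ → ℝ/ℤ is of the form k ↦ (m k / b_n) + ℤ for some n ∈ ℕ and m ∈ ℤ. Conversely, every map of this form is a continuous homomorphism. -/

import Mathlib

def IsDSeq (b : ℕ → ℕ) : Prop :=
  b 0 = 1 ∧ (∀ n, b n ∣ b (n + 1)) ∧ ∀ n, b n ≠ b (n + 1)

/-- If all integer multiples of `y : ℝ/ℤ` have norm `< 1/4`, then `y = 0`. -/
lemma aux_small_subgroup (y : AddCircle (1 : ℝ))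
    (h : ∀ k : ℤ, ‖k • y‖ < 1/4) : y = 0 := by
  classical
  -- positive representative case
  suffices H : ∀ r : ℝ, 0 < r → r < 1/4 →
      ¬ (∀ k : ℤ, ‖k • ((r : ℝ) : AddCircle (1:ℝ))‖ < 1/4) by
    obtain ⟨x, rfl⟩ : ∃ x : ℝ, (x : AddCircle (1:ℝ)) = y := Quot.exists_rep y
    set r : ℝ := x - round x with hr
    have hround : ((round x : ℝ) : AddCircle (1:ℝ)) = 0 := by
      rw [AddCircle.coe_eq_zero_iff]
      exact ⟨round x, by simp⟩
    have hyr : ((r : ℝ) : AddCircle (1:ℝ)) = (x : AddCircle (1:ℝ)) := by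
      rw [hr, AddCircle.coe_sub, hround, sub_zero]
    have hr14 : |r| < 1/4 := by
      have h1 := h 1
      rw [one_smul, ← hyr] at h1
      have hle : |r| ≤ |(1:ℝ)| / 2 := by
        rw [abs_one, hr]; simpa using abs_sub_round x
      rwa [(AddCircle.norm_coe_eq_abs_iff (1:ℝ) one_ne_zero).mpr hle] at h1
    rcases lt_trichotomy r 0 with hneg | hzero | hpos
    · exfalso
      refine H (-r) (by linarith) (by rw [abs_of_neg hneg] at hr14; linarith) ?_
      intro k
      have : ((-r : ℝ) : AddCircle (1:ℝ)) = -((r : ℝ) : AddCircle (1:ℝ)) := by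
        rw [show (-r : ℝ) = 0 - r by ring, AddCircle.coe_sub]; simp
      rw [this, smul_neg, norm_neg, hyr]
      exact h k
    · rw [← hyr, hzero]; simp
    · exact absurd (fun k => by rw [hyr]; exact h k)
        (H r hpos (by rwa [abs_of_pos hpos] at hr14))
  intro r hr0 hr14 hk
  have harch : ∃ n : ℕ, 1/4 ≤ (n : ℝ) * r := by
    obtain ⟨n, hn⟩ := exists_nat_ge (1/(4*r))
    exact ⟨n, by rw [div_le_iff₀ (by linarith)] at hn; nlinarith⟩
  set k := Nat.find harch with hkdef
  have hk14 : 1/4 ≤ (k : ℝ) * r := Nat.find_spec harch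
  have hkpos : k ≠ 0 := by
    intro h0
    rw [h0, Nat.cast_zero, zero_mul] at hk14; linarith
  have hprev : ¬ (1/4 ≤ ((k - 1 : ℕ) : ℝ) * r) :=
    Nat.find_min harch (Nat.sub_lt (Nat.pos_of_ne_zero hkpos) one_pos)
  have hcast : ((k - 1 : ℕ) : ℝ) = (k : ℝ) - 1 := by
    have := Nat.one_le_iff_ne_zero.mpr hkpos
    simp [Nat.cast_sub this]
  have hkr12 : (k : ℝ) * r ≤ 1/2 := by
    rw [hcast] at hprev
    push_neg at hprev
    nlinarith
  have hnorm : ‖((k : ℤ) : ℤ) • ((r : ℝ) : AddCircle (1:ℝ))‖ = (k : ℝ) * r := by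
    rw [← AddCircle.coe_zsmul]
    rw [show ((k : ℤ) • r : ℝ) = (k : ℝ) * r by rw [zsmul_eq_mul]; push_cast; ring,
      AddCircle.norm_coe_eq_abs_iff (1:ℝ) one_ne_zero |>.mpr
      (by rw [abs_of_nonneg (by positivity)]; simpa using hkr12)]
    exact abs_of_nonneg (by positivity)
  have := hk (k : ℤ)
  rw [hnorm] at this
  linarith

theorem stmt_4 (b : ℕ → ℕ) (hb : IsDSeq b)
    (t : TopologicalSpace ℤ) (htg : @IsTopologicalAddGroup ℤ t _)
    (hbasis : (@nhds ℤ t 0).HasBasis (fun _ : ℕ => True) (fun n => {x : ℤ | (b n : ℤ) ∣ x}))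
    (χ : ℤ →+ AddCircle (1 : ℝ)) :
    @Continuous ℤ (AddCircle (1 : ℝ)) t _ χ ↔
      ∃ (n : ℕ) (m : ℤ), ∀ k : ℤ,
        χ k = ((m * k / (b n : ℝ) : ℝ) : AddCircle (1 : ℝ)) := by
  letI := t
  have hbne : ∀ n, (b n : ℝ) ≠ 0 := by
    intro n hn
    have h1 := hb.2.1 n
    have h2 := hb.2.2 n
    have hz : b n = 0 := by exact_mod_cast hn
    rw [hz] at h1 h2
    exact h2 (Nat.eq_zero_of_zero_dvd h1).symm
  constructor
  · intro hχ
    have h0 : χ ⁻¹' (Metric.ball (0 : AddCircle (1:ℝ)) (1/4)) ∈ @nhds ℤ t 0 := by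
      have hct := hχ.continuousAt (x := (0 : ℤ))
      have hmem : Metric.ball (0 : AddCircle (1:ℝ)) (1/4) ∈ nhds (χ 0) := by
        rw [map_zero]; exact Metric.ball_mem_nhds _ (by norm_num)
      exact hct hmem
    obtain ⟨n, -, hn⟩ := hbasis.mem_iff.mp h0
    have hzero : χ (b n) = 0 := by
      apply aux_small_subgroup
      intro k
      have hdvd : ((b n : ℤ) * k) ∈ {x : ℤ | (b n : ℤ) ∣ x} := ⟨k, rfl⟩
      have hball := hn hdvd
      simp only [Set.mem_preimage, Metric.mem_ball, dist_zero_right] at hball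
      have : k • χ (b n) = χ ((b n : ℤ) * k) := by
        rw [← map_zsmul χ k ((b n : ℕ) : ℤ)]
        congr 1
        rw [zsmul_eq_mul, mul_comm]
        norm_cast
      rw [this]
      exact hball
    obtain ⟨r, hr⟩ : ∃ r : ℝ, ((r : ℝ) : AddCircle (1:ℝ)) = χ 1 := Quot.exists_rep _
    have hbr : (((b n : ℝ) * r : ℝ) : AddCircle (1:ℝ)) = 0 := by
      have : (((b n : ℤ) • r : ℝ) : AddCircle (1:ℝ)) = (b n : ℤ) • ((r : ℝ) : AddCircle (1:ℝ)) :=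
        AddCircle.coe_zsmul (1:ℝ)
      rw [hr, ← map_zsmul χ ((b n : ℕ) : ℤ) 1, smul_eq_mul, mul_one] at this
      rw [show ((b n : ℝ) * r : ℝ) = ((b n : ℤ) • r : ℝ) by rw [zsmul_eq_mul]; push_cast; ring,
        this, hzero]
    rw [AddCircle.coe_eq_zero_iff] at hbr
    obtain ⟨m, hm⟩ := hbr
    refine ⟨n, m, fun k => ?_⟩
    have hχk : χ k = k • χ 1 := by
      rw [← map_zsmul χ k 1, smul_eq_mul, mul_one]
    rw [hχk, ← hr, ← AddCircle.coe_zsmul]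
    congr 1
    rw [zsmul_eq_mul]
    have hrm : r = (m : ℝ) / (b n : ℝ) := by
      rw [eq_div_iff (hbne n)]
      rw [zsmul_eq_mul, mul_one] at hm
      linarith [hm]
    rw [hrm]; ring
  · rintro ⟨n, m, hnm⟩
    have hker : ∀ y : ℤ, (b n : ℤ) ∣ y → χ y = 0 := by
      rintro y ⟨j, rfl⟩
      rw [hnm]
      have : ((m : ℝ) * ((b n : ℤ) * j : ℤ) / (b n : ℝ)) = ((m * j : ℤ) : ℝ) := by
        push_cast
        rw [mul_comm ((b n : ℝ)) (j : ℝ), ← mul_assoc, mul_div_assoc,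
          div_self (hbne n), mul_one]
      rw [this, AddCircle.coe_eq_zero_iff]
      exact ⟨m * j, by simp⟩
    have hopen : ∀ s : Set (AddCircle (1:ℝ)), IsOpen (χ ⁻¹' s) := by
      intro s
      rw [isOpen_iff_mem_nhds]
      intro x hx
      rw [← nhds_translation_add_neg x]
      refine Filter.mem_of_superset
        (Filter.preimage_mem_comap (hbasis.mem_of_mem (i := n) trivial)) ?_
      intro y hy
      have : χ y = χ x := by
        have h1 : χ y = χ (y + -x) + χ x := by
          rw [← map_add]; ring_nf
        rw [h1, hker _ hy, zero_add]
      show χ y ∈ s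
      rw [this]
      exact hx
    exact continuous_def.mpr fun s _ => hopen s
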